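/- Let n ≥ 4 and let a, b ∈ A_n be nonzero pure elements. Then the associator (a,a,b) = 0 if and only if both ‖a·b‖ = ‖a‖·‖b‖ and ‖a·(a·b)‖ = ‖a‖·‖a·b‖. -/

import Mathlib

noncomputable section

open scoped Quaternion

/-- The Cayley–Dickson algebra `A n = ℝ^(2^n)` as a type. -/
def CD : ℕ → Type
  | 0 => ℝ
  | n + 1 => CD n × CD n

namespace CD

instance instAddCommGroup : (n : ℕ) → AddCommGroup (CD n)
  | 0 => inferInstanceAs (AddCommGroup ℝ)
  | n + 1 =>
    letI := instAddCommGroup n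
    inferInstanceAs (AddCommGroup (CD n × CD n))

instance instModule : (n : ℕ) → Module ℝ (CD n)
  | 0 => inferInstanceAs (Module ℝ ℝ)
  | n + 1 =>
    letI := instModule n
    inferInstanceAs (Module ℝ (CD n × CD n))

/-- Conjugation in the Cayley–Dickson algebra. -/
def conj : {n : ℕ} → CD n → CD n
  | 0, x => x
  | _ + 1, x => (conj x.1, -x.2)

/-- Cayley–Dickson multiplication. -/
def mul : {n : ℕ} → CD n → CD n → CD n
  | 0, x, y => Mul.mul (α := ℝ) x y
  | _ + 1, x, y =>
    (mul x.1 y.1 - mul (conj y.2) x.2, mul y.2 x.1 + mul x.2 (conj y.1))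

instance instMul (n : ℕ) : Mul (CD n) := ⟨mul⟩

/-- The multiplicative unit `e₀`. -/
def one : {n : ℕ} → CD n
  | 0 => (1 : ℝ)
  | _ + 1 => (one, 0)

instance instOne (n : ℕ) : One (CD n) := ⟨one⟩

/-- The Euclidean inner product on `A n = ℝ^(2^n)`. -/
def inner : {n : ℕ} → CD n → CD n → ℝ
  | 0, x, y => (x * y : ℝ)
  | _ + 1, x, y => inner x.1 y.1 + inner x.2 y.2

/-- The Euclidean norm on `A n = ℝ^(2^n)`. -/
def norm {n : ℕ} (x : CD n) : ℝ := Real.sqrt (inner x x)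

/-- `ã = (-a₂, a₁)`. -/
def tilde {n : ℕ} (a : CD (n + 1)) : CD (n + 1) := (-a.2, a.1)

/-- `ẽ₀ = (0, e₀)`. -/
def etilde (n : ℕ) : CD (n + 1) := ((0 : CD n), (1 : CD n))

/-- An element is pure if its conjugate is its negative. -/
def IsPure {n : ℕ} (a : CD n) : Prop := conj a = -a

/-- An element of `A (n+1)` is doubly pure if both of its coordinates are pure. -/
def IsDoublyPure {n : ℕ} (a : CD (n + 1)) : Prop := IsPure a.1 ∧ IsPure a.2

/-- The associator `(a,b,c) = (ab)c - a(bc)`. -/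
def assoc {n : ℕ} (a b c : CD n) : CD n := a * b * c - a * (b * c)

/-- An element is alternative if `(a,a,x) = 0` for all `x`. -/
def IsAlternative {n : ℕ} (a : CD n) : Prop := ∀ x : CD n, assoc a a x = 0

/-- An element is strongly alternative if `(a,a,x) = 0` and `(a,x,x) = 0` for all `x`. -/
def IsStronglyAlternative {n : ℕ} (a : CD n) : Prop :=
  (∀ x : CD n, assoc a a x = 0) ∧ (∀ x : CD n, assoc a x x = 0)

/-- The pure (imaginary) part of an element. -/
def im {n : ℕ} (a : CD n) : CD n := (2⁻¹ : ℝ) • (a - conj a)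

/-- `H a`, the span of `{e₀, ã, a, ẽ₀}`. -/
def H {n : ℕ} (a : CD (n + 1)) : Submodule ℝ (CD (n + 1)) :=
  Submodule.span ℝ {(1 : CD (n + 1)), tilde a, a, etilde n}

/-- The orthogonal complement of `H a`. -/
def Hperp {n : ℕ} (a : CD (n + 1)) : Set (CD (n + 1)) :=
  {x | ∀ y ∈ H a, inner y x = 0}

end CD


namespace CD

theorem mul_def {n} (x y : CD (n+1)) : x * y =
    (x.1 * y.1 - conj y.2 * x.2, y.2 * x.1 + x.2 * conj y.1) := rfl
theorem conj_def {n} (x : CD (n+1)) : conj x = (conj x.1, -x.2) := rfl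
theorem add_def {n} (x y : CD (n+1)) : x + y = (x.1 + y.1, x.2 + y.2) := rfl
theorem neg_def {n} (x : CD (n+1)) : -x = (-x.1, -x.2) := rfl
theorem sub_def {n} (x y : CD (n+1)) : x - y = (x.1 - y.1, x.2 - y.2) := rfl
theorem smul_def {n} (r : ℝ) (x : CD (n+1)) : r • x = (r • x.1, r • x.2) := rfl
theorem inner_def {n} (x y : CD (n+1)) : inner x y = inner x.1 y.1 + inner x.2 y.2 := rfl
theorem one_def {n} : (1 : CD (n+1)) = ((1 : CD n), (0 : CD n)) := rfl
theorem zero_def {n} : (0 : CD (n+1)) = ((0 : CD n), (0 : CD n)) := rfl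

theorem conj_conj : ∀ {n} (x : CD n), conj (conj x) = x
  | 0, _ => rfl
  | n+1, x => by
    rw [conj_def, conj_def]; simp only [conj_conj x.1, neg_neg]; rfl

theorem conj_neg : ∀ {n} (x : CD n), conj (-x) = -conj x
  | 0, _ => rfl
  | n+1, x => by
    erw [neg_def, conj_def, conj_def, neg_def]; simp only [conj_neg x.1]; rfl

theorem conj_add : ∀ {n} (x y : CD n), conj (x + y) = conj x + conj y
  | 0, _, _ => rfl
  | n+1, x, y => by
    erw [add_def, conj_def, conj_def, conj_def, add_def]
    simp only [conj_add x.1 y.1, neg_add]; rfl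

theorem conj_smul : ∀ {n} (r : ℝ) (x : CD n), conj (r • x) = r • conj x
  | 0, _, _ => rfl
  | n+1, r, x => by
    erw [smul_def, conj_def, conj_def, smul_def]
    simp only [conj_smul r x.1, smul_neg]; rfl

theorem conj_zero : ∀ {n}, conj (0 : CD n) = 0
  | 0 => rfl
  | n+1 => by erw [zero_def, conj_def]; simp only [conj_zero, neg_zero]; rfl

theorem conj_one : ∀ {n}, conj (1 : CD n) = 1
  | 0 => rfl
  | n+1 => by erw [one_def, conj_def]; simp only [conj_one, neg_zero]; rfl

theorem mul_add_pair : ∀ {n} (x y z : CD n),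
    (x + y) * z = x * z + y * z ∧ x * (y + z) = x * y + x * z
  | 0, x, y, z => ⟨add_mul (R := ℝ) x y z, mul_add (R := ℝ) x y z⟩
  | n+1, x, y, z => by
    constructor
    · erw [add_def, mul_def, mul_def, mul_def, add_def]
      rw [(mul_add_pair x.1 y.1 z.1).1, (mul_add_pair (conj z.2) x.2 y.2).2,
        (mul_add_pair z.2 x.1 y.1).2, (mul_add_pair x.2 y.2 (conj z.1)).1]
      exact Prod.ext (by dsimp only; abel) (by dsimp only; abel)
    · erw [add_def, mul_def, mul_def, mul_def, add_def]
      rw [conj_add, (mul_add_pair x.1 y.1 z.1).2, (mul_add_pair (conj y.2) (conj z.2) x.2).1,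
        (mul_add_pair y.2 z.2 x.1).1, conj_add, (mul_add_pair x.2 (conj y.1) (conj z.1)).2]
      exact Prod.ext (by dsimp only; abel) (by dsimp only; abel)

theorem add_mul' {n} (x y z : CD n) : (x + y) * z = x * z + y * z := (mul_add_pair x y z).1
theorem mul_add' {n} (x y z : CD n) : x * (y + z) = x * y + x * z := (mul_add_pair x y z).2

theorem smul_mul_pair : ∀ {n} (r : ℝ) (x y : CD n),
    (r • x) * y = r • (x * y) ∧ x * (r • y) = r • (x * y)
  | 0, r, x, y => ⟨mul_assoc (G := ℝ) r x y, mul_left_comm (G := ℝ) x r y⟩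
  | n+1, r, x, y => by
    constructor
    · erw [smul_def, mul_def, mul_def, smul_def]
      rw [(smul_mul_pair r x.1 y.1).1, (smul_mul_pair r (conj y.2) x.2).2,
        (smul_mul_pair r y.2 x.1).2, (smul_mul_pair r x.2 (conj y.1)).1, smul_sub, smul_add]
    · erw [smul_def, mul_def, mul_def, smul_def]
      rw [conj_smul, (smul_mul_pair r x.1 y.1).2, (smul_mul_pair r (conj y.2) x.2).1,
        (smul_mul_pair r y.2 x.1).1, conj_smul, (smul_mul_pair r x.2 (conj y.1)).2,
        smul_sub, smul_add]

theorem smul_mul' {n} (r : ℝ) (x y : CD n) : (r • x) * y = r • (x * y) := (smul_mul_pair r x y).1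
theorem mul_smul' {n} (r : ℝ) (x y : CD n) : x * (r • y) = r • (x * y) := (smul_mul_pair r x y).2

theorem neg_mul' {n} (x y : CD n) : (-x) * y = -(x * y) := by
  rw [← neg_one_smul ℝ x, smul_mul', neg_one_smul]
theorem mul_neg' {n} (x y : CD n) : x * (-y) = -(x * y) := by
  rw [← neg_one_smul ℝ y, mul_smul', neg_one_smul]
theorem sub_mul' {n} (x y z : CD n) : (x - y) * z = x * z - y * z := by
  rw [sub_eq_add_neg, add_mul', neg_mul', sub_eq_add_neg]
theorem mul_sub' {n} (x y z : CD n) : x * (y - z) = x * y - x * z := by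
  rw [sub_eq_add_neg, mul_add', mul_neg', sub_eq_add_neg]
theorem zero_mul' {n} (x : CD n) : (0 : CD n) * x = 0 :=
  calc (0 : CD n) * x = ((0:ℝ) • (0 : CD n)) * x := by rw [zero_smul]
  _ = (0:ℝ) • ((0 : CD n) * x) := smul_mul' ..
  _ = 0 := zero_smul ..
theorem mul_zero' {n} (x : CD n) : x * (0 : CD n) = 0 :=
  calc x * (0 : CD n) = x * ((0:ℝ) • (0 : CD n)) := by rw [zero_smul]
  _ = (0:ℝ) • (x * (0 : CD n)) := mul_smul' ..
  _ = 0 := zero_smul ..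

theorem one_mul_pair : ∀ {n} (x : CD n), (1 : CD n) * x = x ∧ x * 1 = x
  | 0, x => ⟨one_mul (M := ℝ) x, mul_one (M := ℝ) x⟩
  | n+1, x => by
    constructor
    · erw [one_def, mul_def]
      rw [(one_mul_pair x.1).1, mul_zero', sub_zero, (one_mul_pair x.2).2,
        zero_mul', add_zero]
      exact Prod.mk.eta
    · erw [one_def, mul_def]
      rw [conj_zero, zero_mul', sub_zero, (one_mul_pair x.1).2, zero_mul', zero_add,
        conj_one, (one_mul_pair x.2).2]
      exact Prod.mk.eta

end CD

namespace CD

theorem inner_comm : ∀ {n} (x y : CD n), inner x y = inner y x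
  | 0, x, y => mul_comm (G := ℝ) x y
  | n+1, x, y => by
    rw [inner_def, inner_def, inner_comm x.1 y.1, inner_comm x.2 y.2]

theorem inner_add_left : ∀ {n} (x y z : CD n), inner (x + y) z = inner x z + inner y z
  | 0, x, y, z => add_mul (R := ℝ) x y z
  | n+1, x, y, z => by
    erw [add_def, inner_def, inner_def, inner_def]
    rw [inner_add_left x.1 y.1 z.1, inner_add_left x.2 y.2 z.2]; ring

theorem inner_smul_left : ∀ {n} (r : ℝ) (x y : CD n), inner (r • x) y = r * inner x y
  | 0, r, x, y => mul_assoc (G := ℝ) r x y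
  | n+1, r, x, y => by
    erw [smul_def, inner_def, inner_def]
    rw [inner_smul_left r x.1 y.1, inner_smul_left r x.2 y.2]; ring

theorem inner_add_right {n} (x y z : CD n) : inner x (y + z) = inner x y + inner x z := by
  rw [inner_comm, inner_add_left, inner_comm y x, inner_comm z x]
theorem inner_smul_right {n} (r : ℝ) (x y : CD n) : inner x (r • y) = r * inner x y := by
  rw [inner_comm, inner_smul_left, inner_comm y x]
theorem inner_neg_left {n} (x y : CD n) : inner (-x) y = -inner x y := by
  rw [← neg_one_smul ℝ x, inner_smul_left]; ring
theorem inner_neg_right {n} (x y : CD n) : inner x (-y) = -inner x y := by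
  rw [inner_comm, inner_neg_left, inner_comm y x]
theorem inner_sub_left {n} (x y z : CD n) : inner (x - y) z = inner x z - inner y z := by
  rw [sub_eq_add_neg, inner_add_left, inner_neg_left, sub_eq_add_neg]
theorem inner_sub_right {n} (x y z : CD n) : inner x (y - z) = inner x y - inner x z := by
  rw [sub_eq_add_neg, inner_add_right, inner_neg_right, sub_eq_add_neg]
theorem inner_zero_left {n} (x : CD n) : inner (0 : CD n) x = 0 := by
  rw [← zero_smul ℝ (0 : CD n), inner_smul_left, zero_mul]

theorem inner_self_nonneg : ∀ {n} (x : CD n), 0 ≤ inner x x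
  | 0, x => mul_self_nonneg (R := ℝ) x
  | n+1, x => by
    rw [inner_def]
    exact add_nonneg (inner_self_nonneg x.1) (inner_self_nonneg x.2)

theorem r3 (x : ℝ) : x * x = 0 ↔ x = 0 := mul_self_eq_zero

theorem inner_self_eq_zero : ∀ {n} (x : CD n), inner x x = 0 ↔ x = 0
  | 0, x => r3 x
  | n+1, x => by
    rw [inner_def]
    constructor
    · intro h
      have e1 : inner x.1 x.1 = 0 := by
        linarith [inner_self_nonneg x.1, inner_self_nonneg x.2]
      have e2 : inner x.2 x.2 = 0 := by
        linarith [inner_self_nonneg x.1, inner_self_nonneg x.2]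
      exact Prod.ext ((inner_self_eq_zero x.1).1 e1) ((inner_self_eq_zero x.2).1 e2)
    · intro h
      subst h
      show inner (0 : CD n) 0 + inner (0 : CD n) 0 = 0
      rw [inner_zero_left, add_zero]

theorem r1 (x y z : ℝ) : (x*y)*z = y*(x*z) := by ring
theorem r2 (x y z : ℝ) : (x*y)*z = x*(z*y) := by ring

theorem adj : ∀ {n} (x y z : CD n),
    inner (x * y) z = inner y (conj x * z) ∧ inner (x * y) z = inner x (z * conj y)
  | 0, x, y, z => ⟨r1 x y z, r2 x y z⟩
  | n+1, x, y, z => by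
    have h1 : inner (x.1 * y.1) z.1 = inner y.1 (conj x.1 * z.1) := (adj x.1 y.1 z.1).1
    have h1' : inner (x.1 * y.1) z.1 = inner x.1 (z.1 * conj y.1) := (adj x.1 y.1 z.1).2
    have h2 : inner (conj y.2 * x.2) z.1 = inner x.2 (y.2 * z.1) := by
      have := (adj (conj y.2) x.2 z.1).1; rwa [conj_conj] at this
    have h2' : inner y.2 (x.2 * conj z.1) = inner x.2 (y.2 * z.1) := by
      have := (adj x.2 (conj z.1) y.2).2; rw [conj_conj] at this
      rw [inner_comm, ← this, inner_comm]
    have h3 : inner (y.2 * x.1) z.2 = inner y.2 (z.2 * conj x.1) := (adj y.2 x.1 z.2).2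
    have h3' : inner (y.2 * x.1) z.2 = inner x.1 (conj y.2 * z.2) := (adj y.2 x.1 z.2).1
    have h4 : inner (x.2 * conj y.1) z.2 = inner x.2 (z.2 * y.1) := by
      have := (adj x.2 (conj y.1) z.2).2; rwa [conj_conj] at this
    have h4' : inner y.1 (conj z.2 * x.2) = inner x.2 (z.2 * y.1) := by
      have := (adj (conj z.2) x.2 y.1).1; rw [conj_conj] at this
      rw [inner_comm, this]
    constructor
    · erw [mul_def x y, conj_def x, mul_def, inner_def, inner_def]
      simp only [inner_sub_left, inner_add_left, inner_sub_right, inner_add_right,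
        mul_neg', neg_mul', inner_neg_right, inner_neg_left, conj_neg, sub_neg_eq_add]
      linarith [h1, h1', h2, h2', h3, h3', h4, h4']
    · erw [mul_def x y, conj_def y, mul_def, inner_def, inner_def]
      simp only [inner_sub_left, inner_add_left, inner_sub_right, inner_add_right,
        mul_neg', neg_mul', inner_neg_right, inner_neg_left, conj_neg, conj_conj,
        sub_neg_eq_add]
      linarith [h1, h1', h2, h2', h3, h3', h4, h4']

theorem mul_conj_pair : ∀ {n} (x : CD n),
    x * conj x = inner x x • (1 : CD n) ∧ conj x * x = inner x x • (1 : CD n)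
  | 0, x => ⟨(mul_one (M := ℝ) _).symm, (mul_one (M := ℝ) _).symm⟩
  | n+1, x => by
    constructor
    · erw [conj_def, mul_def, inner_def, one_def, smul_def]
      refine Prod.ext ?_ ?_
      · show x.1 * conj x.1 - conj (-x.2) * x.2 = _
        rw [conj_neg, neg_mul', sub_neg_eq_add, (mul_conj_pair x.1).1,
          (mul_conj_pair x.2).2, add_smul]
      · show -x.2 * x.1 + x.2 * conj (conj x.1) = _
        rw [conj_conj, neg_mul', smul_zero, neg_add_cancel]
    · erw [conj_def, mul_def, inner_def, one_def, smul_def]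
      refine Prod.ext ?_ ?_
      · show conj x.1 * x.1 - conj x.2 * -x.2 = _
        rw [mul_neg', sub_neg_eq_add, (mul_conj_pair x.1).2, (mul_conj_pair x.2).2, add_smul]
      · show x.2 * conj x.1 + -x.2 * conj x.1 = _
        rw [neg_mul', smul_zero, add_neg_cancel]

theorem norm_def {n} (x : CD n) : norm x = Real.sqrt (inner x x) := rfl
theorem norm_mul_self {n} (x : CD n) : norm x * norm x = inner x x :=
  Real.mul_self_sqrt (inner_self_nonneg x)
theorem norm_nonneg' {n} (x : CD n) : 0 ≤ norm x := Real.sqrt_nonneg _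
theorem norm_smul'' {n} (r : ℝ) (x : CD n) : norm (r • x) = |r| * norm x := by
  rw [norm_def, norm_def, inner_smul_left, inner_smul_right, ← mul_assoc,
    show r * r * inner x x = |r|^2 * inner x x by rw [sq_abs]; ring,
    Real.sqrt_mul (sq_nonneg |r|), Real.sqrt_sq (abs_nonneg r)]

end CD

/-- For `n ≥ 4` and nonzero pure `a, b`, `(a,a,b) = 0` iff
`‖ab‖ = ‖a‖‖b‖` and `‖a(ab)‖ = ‖a‖‖ab‖`. -/
theorem assoc_eq_zero_iff_normed (n : ℕ) (hn : 4 ≤ n) (a b : CD n)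
    (ha0 : a ≠ 0) (hb0 : b ≠ 0) (ha : CD.IsPure a) (hb : CD.IsPure b) :
    CD.assoc a a b = 0 ↔
      CD.norm (a * b) = CD.norm a * CD.norm b ∧
      CD.norm (a * (a * b)) = CD.norm a * CD.norm (a * b) := by
  have ha' : CD.conj a = -a := ha
  have hNnn : 0 ≤ CD.inner a a := CD.inner_self_nonneg a
  have hna : CD.norm a * CD.norm a = CD.inner a a := CD.norm_mul_self a
  have haa : a * a = -(CD.inner a a • (1 : CD n)) := by
    have h1 := (CD.mul_conj_pair a).1
    rw [ha', CD.mul_neg'] at h1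
    exact neg_eq_iff_eq_neg.mp h1
  have hsq : (a * a) * b = -(CD.inner a a • b) := by
    rw [haa, CD.neg_mul', CD.smul_mul', (CD.one_mul_pair b).1]
  have hassoc : CD.assoc a a b = -(CD.inner a a • b) - a * (a * b) := by
    rw [CD.assoc, hsq]
  have key : CD.inner (a * (a * b)) b = -(CD.inner (a * b) (a * b)) := by
    have h := (CD.adj a (a * b) b).1
    rw [ha', CD.neg_mul', CD.inner_neg_right] at h
    exact h
  constructor
  · intro h
    rw [hassoc, sub_eq_zero] at h
    have hac : a * (a * b) = -(CD.inner a a • b) := h.symm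
    have hcc : CD.inner (a * b) (a * b) = CD.inner a a * CD.inner b b := by
      have k := key
      rw [hac, CD.inner_neg_left, CD.inner_smul_left] at k
      linarith
    have h1 : CD.norm (a * b) = CD.norm a * CD.norm b := by
      rw [CD.norm_def, hcc, ← hna, ← CD.norm_mul_self b,
        show CD.norm a * CD.norm a * (CD.norm b * CD.norm b)
          = (CD.norm a * CD.norm b) * (CD.norm a * CD.norm b) by ring,
        Real.sqrt_mul_self (mul_nonneg (CD.norm_nonneg' a) (CD.norm_nonneg' b))]
    refine ⟨h1, ?_⟩
    rw [hac, show -(CD.inner a a • b) = (-(CD.inner a a)) • b from (neg_smul _ b).symm,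
      CD.norm_smul'', abs_neg, abs_of_nonneg hNnn, h1, ← hna]
    ring
  · rintro ⟨h1, h2⟩
    have hcc : CD.inner (a * b) (a * b) = CD.inner a a * CD.inner b b := by
      have e := CD.norm_mul_self (a * b)
      rw [h1] at e
      rw [← e, ← hna, ← CD.norm_mul_self b]; ring
    have hacac : CD.inner (a * (a * b)) (a * (a * b))
        = CD.inner a a * (CD.inner a a * CD.inner b b) := by
      have e := CD.norm_mul_self (a * (a * b))
      rw [h2] at e
      have e2 : CD.inner (a * (a * b)) (a * (a * b))
          = (CD.norm a * CD.norm a) * (CD.norm (a * b) * CD.norm (a * b)) := by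
        rw [← e]; ring
      rw [e2, hna, CD.norm_mul_self (a * b), hcc]
    have hvb : CD.inner (a * (a * b)) b = -(CD.inner a a * CD.inner b b) := by
      rw [key, hcc]
    have hv : CD.inner (a * (a * b) + CD.inner a a • b) (a * (a * b) + CD.inner a a • b) = 0 := by
      simp only [CD.inner_add_left, CD.inner_add_right, CD.inner_smul_left, CD.inner_smul_right,
        CD.inner_comm b (a * (a * b))]
      rw [hacac, hvb]
      ring
    have hv0 : a * (a * b) + CD.inner a a • b = 0 := (CD.inner_self_eq_zero _).1 hv
    have hac : a * (a * b) = -(CD.inner a a • b) := eq_neg_of_add_eq_zero_left hv0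
    rw [hassoc, hac, sub_self]
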